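/- Let r ∈ ℕ and 0 < 1/n ≪ ρ ≪ d, 1/r with 0 < d < 1. If G is a (ρ,d)-dense graph on n vertices, then G contains at least (d/2)^C(r+1,2) · nʳ / r! copies of K_r, each of which is (dʳn/2ʳ)-extendable, i.e. the r vertices of the clique have at least dʳn/2ʳ common neighbours in G. -/

import Mathlib

open Finset

/-- The number of edges of `G` with both endpoints in `X`, i.e. `e(G[X])`. -/
noncomputable def inducedEdgeCount {V : Type*} [Fintype V] (G : SimpleGraph V)
    (X : Finset V) : ℕ :=
  letI : DecidableEq V := Classical.decEq V
  letI : DecidableRel G.Adj := Classical.decRel _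
  letI : DecidablePred (fun e : Sym2 V => ∀ v ∈ e, v ∈ X) := Classical.decPred _
  (G.edgeFinset.filter (fun e => ∀ v ∈ e, v ∈ X)).card

/-- A graph `G` on `n` vertices is `(ρ,d)`-dense if every vertex subset `X` satisfies
`e(G[X]) ≥ d·C(|X|,2) − ρn²`. -/
def LocallyDense {V : Type*} [Fintype V] (G : SimpleGraph V) (ρ d : ℝ) : Prop :=
  ∀ X : Finset V,
    d * (X.card.choose 2 : ℝ) - ρ * (Fintype.card V : ℝ) ^ 2 ≤ (inducedEdgeCount G X : ℝ)


/-- The number of common neighbours in `G` of the vertices of `K`. -/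
noncomputable def commonNbhdCard {V : Type*} [Fintype V] (G : SimpleGraph V)
    (K : Finset V) : ℕ :=
  letI : DecidableRel G.Adj := Classical.decRel _
  letI : DecidablePred (fun v : V => ∀ x ∈ K, G.Adj x v) := Classical.decPred _
  (Finset.univ.filter (fun v : V => ∀ x ∈ K, G.Adj x v)).card

noncomputable def CN {n : ℕ} (G : SimpleGraph (Fin n)) (K : Finset (Fin n)) : Finset (Fin n) :=
  letI : DecidablePred (fun v : Fin n => ∀ x ∈ K, G.Adj x v) := Classical.decPred _
  Finset.univ.filter (fun v : Fin n => ∀ x ∈ K, G.Adj x v)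

lemma mem_CN {n : ℕ} {G : SimpleGraph (Fin n)} {K : Finset (Fin n)} {v : Fin n} :
    v ∈ CN G K ↔ ∀ x ∈ K, G.Adj x v := by
  classical
  unfold CN
  simp

lemma commonNbhdCard_eq {n : ℕ} (G : SimpleGraph (Fin n)) (K : Finset (Fin n)) :
    commonNbhdCard G K = (CN G K).card := rfl

lemma sum_CN_inter {n : ℕ} (G : SimpleGraph (Fin n)) (X : Finset (Fin n)) :
    ∑ v ∈ X, (CN G {v} ∩ X).card = 2 * inducedEdgeCount G X := by
  classical
  let H : SimpleGraph (Fin n) :=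
    { Adj := fun a b => G.Adj a b ∧ a ∈ X ∧ b ∈ X
      symm := ⟨fun a b h => ⟨h.1.symm, h.2.2, h.2.1⟩⟩
      loopless := ⟨fun a h => h.1.ne rfl⟩ }
  letI : DecidableRel H.Adj := Classical.decRel _
  have hedge : inducedEdgeCount G X = H.edgeFinset.card := by
    unfold inducedEdgeCount
    congr 1
    ext e
    induction e using Sym2.ind with
    | _ a b =>
      simp only [Finset.mem_filter, SimpleGraph.mem_edgeFinset, SimpleGraph.mem_edgeSet,
        Sym2.mem_iff, H]
      constructor
      · rintro ⟨h, h2⟩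
        exact ⟨h, h2 a (Or.inl rfl), h2 b (Or.inr rfl)⟩
      · rintro ⟨h, h1, h2⟩
        exact ⟨h, fun v hv => by rcases hv with rfl|rfl <;> assumption⟩
  have hdeg : ∀ v ∈ X, H.degree v = (CN G {v} ∩ X).card := by
    intro v hv
    rw [SimpleGraph.degree]
    congr 1
    ext w
    simp [SimpleGraph.mem_neighborFinset, mem_CN, H, hv]
  have hdeg0 : ∀ v, v ∉ X → H.degree v = 0 := by
    intro v hv
    rw [SimpleGraph.degree, Finset.card_eq_zero]
    ext w
    simp [SimpleGraph.mem_neighborFinset, H, hv]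
  calc ∑ v ∈ X, (CN G {v} ∩ X).card = ∑ v ∈ X, H.degree v :=
        Finset.sum_congr rfl (fun v hv => (hdeg v hv).symm)
    _ = ∑ v, H.degree v :=
        Finset.sum_subset (Finset.subset_univ X) (fun v _ hv => hdeg0 v hv)
    _ = 2 * H.edgeFinset.card := H.sum_degrees_eq_twice_card_edges
    _ = 2 * inducedEdgeCount G X := by rw [hedge]

/-- The set of good extensions of `K`. -/
noncomputable def SF {n : ℕ} (G : SimpleGraph (Fin n)) (d : ℝ) (k : ℕ)
    (K : Finset (Fin n)) : Finset (Fin n) :=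
  letI : DecidablePred (fun v : Fin n =>
      (d/2)^(k+1) * (n:ℝ) ≤ ((CN G (insert v K)).card : ℝ)) := Classical.decPred _
  (CN G K).filter (fun v => (d/2)^(k+1) * (n:ℝ) ≤ ((CN G (insert v K)).card : ℝ))

lemma mem_SF {n : ℕ} {G : SimpleGraph (Fin n)} {d : ℝ} {k : ℕ} {K : Finset (Fin n)} {v : Fin n} :
    v ∈ SF G d k K ↔ v ∈ CN G K ∧ (d/2)^(k+1) * (n:ℝ) ≤ ((CN G (insert v K)).card : ℝ) := by
  classical
  unfold SF
  simp [Finset.mem_filter]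

lemma CN_insert {n : ℕ} (G : SimpleGraph (Fin n)) (K : Finset (Fin n)) (v : Fin n) :
    CN G (insert v K) = CN G {v} ∩ CN G K := by
  classical
  ext w
  simp [mem_CN, Finset.forall_mem_insert, and_comm]

set_option maxHeartbeats 1000000 in
lemma step_card {n r k : ℕ} {G : SimpleGraph (Fin n)} {ρ d : ℝ}
    (hd0 : 0 < d) (hd1 : d < 1) (hld : LocallyDense G ρ d)
    (hρ : ρ ≤ (d/2)^(2*r)/4) (hn : 2 ≤ (d/2)^(2*r) * (n:ℝ))
    (hk : k < r) (K : Finset (Fin n))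
    (hcn : (d/2)^k * (n:ℝ) ≤ ((CN G K).card : ℝ)) :
    (d/2)^(k+1) * (n:ℝ) ≤ ((SF G d k K).card : ℝ) := by
  classical
  set U := CN G K with hU
  set u : ℝ := (U.card : ℝ) with hu
  set t : ℝ := (d/2)^(k+1) * (n:ℝ) with ht
  set s : ℝ := (d/2)^k * (n:ℝ) with hs
  have hd2 : 0 < d/2 := by linarith
  have hd2l : d/2 < 1 := by linarith
  have hpow_pos : ∀ j : ℕ, (0:ℝ) < (d/2)^j := fun j => pow_pos hd2 j
  have hpow_le1 : ∀ j : ℕ, (d/2)^j ≤ 1 := fun j => pow_le_one₀ hd2.le hd2l.le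
  have hn0 : (0:ℝ) < n := by nlinarith [hpow_pos (2*r), hpow_le1 (2*r)]
  have hs0 : 0 < s := mul_pos (hpow_pos k) hn0
  have hts : 2 * t = d * s := by rw [ht, hs, pow_succ]; ring
  have hsu : s ≤ u := hcn
  have hun : u ≤ (n:ℝ) := by
    have h2 : U.card ≤ n := by simpa using Finset.card_le_univ U
    rw [hu]
    exact_mod_cast h2
  -- degree sum identity
  have hins : ∀ v : Fin n, CN G (insert v K) = CN G {v} ∩ U := fun v => CN_insert G K v
  have hsum : ∑ v ∈ U, (CN G (insert v K)).card = 2 * inducedEdgeCount G U := by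
    have h2 : ∑ v ∈ U, (CN G (insert v K)).card = ∑ v ∈ U, (CN G {v} ∩ U).card :=
      Finset.sum_congr rfl (fun v _ => by rw [hins v])
    exact h2.trans (sum_CN_inter G U)
  -- lower bound from local density
  have hld' := hld U
  rw [Fintype.card_fin] at hld'
  have hchoose : ((U.card.choose 2 : ℕ) : ℝ) = u * (u-1)/2 := Nat.cast_choose_two ℝ U.card
  have hlow : d * u * (u-1) - 2 * ρ * (n:ℝ)^2 ≤ ∑ v ∈ U, ((CN G (insert v K)).card : ℝ) := by
    have hc : ∑ v ∈ U, ((CN G (insert v K)).card : ℝ)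
        = ((2 * inducedEdgeCount G U : ℕ) : ℝ) := by
      rw [← hsum]; push_cast; ring
    rw [hc]
    push_cast
    rw [hchoose] at hld'
    linarith
  -- upper bound via split
  set P : Fin n → Prop := fun v => t ≤ ((CN G (insert v K)).card : ℝ) with hP
  set S := U.filter P with hSdef
  have hSeq : S = SF G d k K := by
    ext v
    simp only [hSdef, Finset.mem_filter, mem_SF, hP, ht, hU]
  set m : ℝ := (S.card : ℝ) with hm
  have hCNsub : ∀ v, (CN G (insert v K)).card ≤ U.card := fun v => by
    rw [hins v]; exact Finset.card_le_card Finset.inter_subset_right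
  have h1 : ∑ v ∈ U.filter P, ((CN G (insert v K)).card : ℝ) ≤ m * u := by
    have := Finset.sum_le_card_nsmul (U.filter P)
      (fun v => ((CN G (insert v K)).card : ℝ)) u
      (fun v _ => by exact_mod_cast Nat.cast_le.mpr (hCNsub v))
    rw [nsmul_eq_mul] at this
    exact this
  have h2 : ∑ v ∈ U.filter (fun v => ¬ P v), ((CN G (insert v K)).card : ℝ)
      ≤ ((U.filter (fun v => ¬ P v)).card : ℝ) * t := by
    have := Finset.sum_le_card_nsmul (U.filter (fun v => ¬ P v))
      (fun v => ((CN G (insert v K)).card : ℝ)) t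
      (fun v hv => (not_le.mp (Finset.mem_filter.mp hv).2).le)
    rw [nsmul_eq_mul] at this
    exact this
  have hcards : m + ((U.filter (fun v => ¬ P v)).card : ℝ) = u := by
    rw [hm, hu]
    exact_mod_cast congrArg (Nat.cast : ℕ → ℝ)
      (Finset.card_filter_add_card_filter_not (s := U) (p := P))
  have hsplit := Finset.sum_filter_add_sum_filter_not U P
    (fun v => ((CN G (insert v K)).card : ℝ))
  have hupp : d * u * (u-1) - 2 * ρ * (n:ℝ)^2 ≤ m * u + (u - m) * t := by
    have h3 : ((U.filter (fun v => ¬ P v)).card : ℝ) = u - m := by linarith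
    rw [h3] at h2
    calc d * u * (u-1) - 2 * ρ * (n:ℝ)^2
        ≤ ∑ v ∈ U, ((CN G (insert v K)).card : ℝ) := hlow
      _ = _ + _ := hsplit.symm
      _ ≤ m * u + (u - m) * t := add_le_add h1 h2
  -- key quadratic inequality
  have hA : (d/2)^(2*r) * (n:ℝ)^2 ≤ t^2 := by
    have e1 : t^2 = (d/2)^((k+1)*2) * (n:ℝ)^2 := by rw [ht, mul_pow, ← pow_mul]
    have e2 : (d/2)^(2*r) ≤ (d/2)^((k+1)*2) :=
      pow_le_pow_of_le_one hd2.le hd2l.le (by omega)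
    rw [e1]
    exact mul_le_mul_of_nonneg_right e2 (sq_nonneg _)
  have hB : 2*ρ*(n:ℝ)^2 ≤ t^2/2 := by nlinarith [sq_nonneg (n:ℝ)]
  have hC : d * u ≤ t^2/2 := by
    have hdu : d * u ≤ (n:ℝ) := by nlinarith
    have h4 : (n:ℝ) ≤ (d/2)^(2*r) * (n:ℝ)^2 / 2 := by nlinarith
    nlinarith
  have hE : t * (u - t) ≤ d * u * (u-1) - 2*ρ*(n:ℝ)^2 - u * t := by
    nlinarith [mul_nonneg (mul_nonneg hd0.le (le_trans hs0.le hsu)) (sub_nonneg.2 hsu)]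
  have hut : t < u := by nlinarith
  have hfin : t * (u - t) ≤ m * (u - t) := by nlinarith
  have hmt : t ≤ m := le_of_mul_le_mul_right hfin (by linarith : (0:ℝ) < u - t)
  rw [← hSeq]
  exact hmt

/-- The family of good `k`-cliques. -/
noncomputable def KK {n : ℕ} (G : SimpleGraph (Fin n)) (d : ℝ) (k : ℕ) :
    Finset (Finset (Fin n)) :=
  letI : DecidablePred (fun K : Finset (Fin n) =>
      K.card = k ∧ G.IsClique (K : Set (Fin n)) ∧ (d/2)^k * (n:ℝ) ≤ ((CN G K).card : ℝ)) :=
    Classical.decPred _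
  Finset.univ.filter (fun K : Finset (Fin n) =>
      K.card = k ∧ G.IsClique (K : Set (Fin n)) ∧ (d/2)^k * (n:ℝ) ≤ ((CN G K).card : ℝ))

lemma mem_KK {n : ℕ} {G : SimpleGraph (Fin n)} {d : ℝ} {k : ℕ} {K : Finset (Fin n)} :
    K ∈ KK G d k ↔
      K.card = k ∧ G.IsClique (K : Set (Fin n)) ∧ (d/2)^k * (n:ℝ) ≤ ((CN G K).card : ℝ) := by
  classical
  unfold KK
  simp [Finset.mem_filter]

lemma insert_mem_KK {n : ℕ} {G : SimpleGraph (Fin n)} {d : ℝ} {k : ℕ}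
    {K : Finset (Fin n)} {v : Fin n} (hK : K ∈ KK G d k) (hv : v ∈ SF G d k K) :
    v ∉ K ∧ insert v K ∈ KK G d (k+1) := by
  obtain ⟨hv1, hv2⟩ := mem_SF.mp hv
  have hadj : ∀ x ∈ K, G.Adj x v := mem_CN.mp hv1
  have hvK : v ∉ K := fun h => (hadj v h).ne rfl
  obtain ⟨hc, hcl, _⟩ := mem_KK.mp hK
  refine ⟨hvK, mem_KK.mpr ⟨?_, ?_, hv2⟩⟩
  · rw [Finset.card_insert_of_notMem hvK, hc]
  · rw [Finset.coe_insert]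
    exact hcl.insert (fun b hb _ => (hadj b hb).symm)

set_option maxHeartbeats 1000000 in
lemma KK_card {n r : ℕ} {G : SimpleGraph (Fin n)} {ρ d : ℝ}
    (hd0 : 0 < d) (hd1 : d < 1) (hld : LocallyDense G ρ d)
    (hρ : ρ ≤ (d/2)^(2*r)/4) (hn : 2 ≤ (d/2)^(2*r) * (n:ℝ)) :
    ∀ k, k ≤ r →
      (d/2)^((k+1).choose 2) * (n:ℝ)^k / (k.factorial : ℝ) ≤ ((KK G d k).card : ℝ) := by
  classical
  have hd2 : 0 < d/2 := by linarith
  have hd2l : d/2 < 1 := by linarith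
  have hn0 : (0:ℝ) < n := by
    nlinarith [pow_pos hd2 (2*r), pow_le_one₀ hd2.le hd2l.le (n := 2*r)]
  intro k
  induction k with
  | zero =>
    intro _
    have hCNempty : CN G (∅ : Finset (Fin n)) = Finset.univ := by
      ext w; simp [mem_CN]
    have hmem : (∅ : Finset (Fin n)) ∈ KK G d 0 := by
      rw [mem_KK]
      refine ⟨Finset.card_empty, by simp, ?_⟩
      rw [hCNempty]
      simp [Finset.card_univ]
    have h1 : (1:ℝ) ≤ ((KK G d 0).card : ℝ) := by
      have := Finset.card_pos.mpr ⟨∅, hmem⟩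
      exact_mod_cast this
    have : (1:ℕ).choose 2 = 0 := by decide
    rw [this]
    simpa using h1
  | succ k ih =>
    intro hk1
    have hk : k < r := hk1
    have ihr := ih (le_of_lt hk)
    set t : ℝ := (d/2)^(k+1) * (n:ℝ) with ht
    -- the double counting set
    set T : Finset (Finset (Fin n) × Fin n) :=
      (KK G d k).biUnion (fun K => (SF G d k K).image (fun v => (K, v))) with hT
    have hmemT : ∀ p : Finset (Fin n) × Fin n,
        p ∈ T ↔ p.1 ∈ KK G d k ∧ p.2 ∈ SF G d k p.1 := by
      intro p
      rw [hT, Finset.mem_biUnion]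
      constructor
      · rintro ⟨K, hK, hp⟩
        obtain ⟨v, hv, rfl⟩ := Finset.mem_image.mp hp
        exact ⟨hK, hv⟩
      · rintro ⟨h1, h2⟩
        exact ⟨p.1, h1, Finset.mem_image.mpr ⟨p.2, h2, rfl⟩⟩
    have hTcard : T.card = ∑ K ∈ KK G d k, (SF G d k K).card := by
      rw [hT, Finset.card_biUnion]
      · exact Finset.sum_congr rfl (fun K _ =>
          Finset.card_image_of_injective _ (fun a b h => (Prod.ext_iff.mp h).2))
      · intro K hK K' hK' hne
        apply Finset.disjoint_left.mpr
        intro p hp hp'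
        obtain ⟨v, _, rfl⟩ := Finset.mem_image.mp hp
        obtain ⟨v', _, h⟩ := Finset.mem_image.mp hp'
        exact hne ((Prod.ext_iff.mp h).1.symm)
    -- lower bound on T.card
    have hlowT : ((KK G d k).card : ℝ) * t ≤ (T.card : ℝ) := by
      have hbound : ∀ K ∈ KK G d k, t ≤ ((SF G d k K).card : ℝ) := by
        intro K hK
        exact step_card hd0 hd1 hld hρ hn hk K (mem_KK.mp hK).2.2
      have := Finset.card_nsmul_le_sum (KK G d k)
        (fun K => ((SF G d k K).card : ℝ)) t hbound
      rw [nsmul_eq_mul] at this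
      refine le_trans this ?_
      rw [hTcard]
      push_cast
      exact le_refl _
    -- upper bound via fibers of insert
    have himg : ∀ p ∈ T, (insert p.2 p.1 : Finset (Fin n)) ∈ KK G d (k+1) := by
      intro p hp
      obtain ⟨h1, h2⟩ := (hmemT p).mp hp
      exact (insert_mem_KK h1 h2).2
    have hfib : ∀ L ∈ KK G d (k+1),
        (T.filter (fun p => insert p.2 p.1 = L)).card ≤ k+1 := by
      intro L hL
      have hcard : L.card = k+1 := (mem_KK.mp hL).1
      rw [← hcard]
      apply Finset.card_le_card_of_injOn (fun p => p.2)
      · intro p hp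
        have := (Finset.mem_filter.mp hp).2
        rw [← this]
        exact Finset.mem_insert_self _ _
      · intro p hp q hq hpq
        have hpq' : p.2 = q.2 := hpq
        have hpT := (Finset.mem_filter.mp hp).1
        have hqT := (Finset.mem_filter.mp hq).1
        have hpL := (Finset.mem_filter.mp hp).2
        have hqL := (Finset.mem_filter.mp hq).2
        obtain ⟨hp1, hp2⟩ := (hmemT p).mp hpT
        obtain ⟨hq1, hq2⟩ := (hmemT q).mp hqT
        have hpK : p.2 ∉ p.1 := (insert_mem_KK hp1 hp2).1
        have hqK : q.2 ∉ q.1 := (insert_mem_KK hq1 hq2).1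
        have e1 : p.1 = L.erase p.2 := by
          rw [← hpL, Finset.erase_insert hpK]
        have e2 : q.1 = L.erase q.2 := by
          rw [← hqL, Finset.erase_insert hqK]
        have : p.1 = q.1 := by rw [e1, e2, hpq']
        exact Prod.ext this hpq'
    have hupT : T.card ≤ (k+1) * (KK G d (k+1)).card :=
      Finset.card_le_mul_card_image_of_maps_to himg (k+1) hfib
    -- arithmetic
    have hupTR : (T.card : ℝ) ≤ ((k:ℝ)+1) * ((KK G d (k+1)).card : ℝ) := by
      exact_mod_cast hupT
    have hA : (d/2)^((k+1+1).choose 2) * (n:ℝ)^(k+1) / ((k+1).factorial : ℝ) * ((k:ℝ)+1)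
        = (d/2)^((k+1).choose 2) * (n:ℝ)^k / (k.factorial : ℝ) * t := by
      have hch : (k+1+1).choose 2 = (k+1).choose 2 + (k+1) := by
        rw [Nat.choose_succ_succ (k+1) 1, Nat.choose_one_right]
        ring
      rw [hch, ht, pow_add, Nat.factorial_succ, pow_succ]
      have hfac : (k.factorial : ℝ) ≠ 0 := by
        exact_mod_cast Nat.factorial_ne_zero k
      push_cast
      field_simp
      ring
    have hkpos : (0:ℝ) < (k:ℝ)+1 := by positivity
    have htpos : 0 ≤ t := by positivity
    have step1 : (d/2)^((k+1).choose 2) * (n:ℝ)^k / (k.factorial : ℝ) * t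
        ≤ ((KK G d k).card : ℝ) * t := mul_le_mul_of_nonneg_right ihr htpos
    have : (d/2)^((k+1+1).choose 2) * (n:ℝ)^(k+1) / ((k+1).factorial : ℝ) * ((k:ℝ)+1)
        ≤ ((KK G d (k+1)).card : ℝ) * ((k:ℝ)+1) := by
      rw [hA]
      calc _ ≤ ((KK G d k).card : ℝ) * t := step1
        _ ≤ (T.card : ℝ) := hlowT
        _ ≤ ((k:ℝ)+1) * ((KK G d (k+1)).card : ℝ) := hupTR
        _ = ((KK G d (k+1)).card : ℝ) * ((k:ℝ)+1) := mul_comm _ _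
    exact le_of_mul_le_mul_right this hkpos


/-- for `0 < 1/n ≪ ρ ≪ d, 1/r` with `0 < d < 1`, every `(ρ,d)`-dense graph `G`
on `n` vertices contains at least `(d/2)^C(r+1,2) · nʳ / r!` copies of `K_r`, each of which is
`(dʳn/2ʳ)`-extendable. -/
theorem stmt_3 :
    ∀ r : ℕ, 1 ≤ r → ∀ d : ℝ, 0 < d → d < 1 →
    ∃ ρ₀ : ℝ, 0 < ρ₀ ∧ ∀ ρ : ℝ, 0 < ρ → ρ ≤ ρ₀ →
    ∃ n₀ : ℕ, ∀ n : ℕ, n₀ ≤ n → ∀ G : SimpleGraph (Fin n),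
      LocallyDense G ρ d →
      ∃ 𝒦 : Finset (Finset (Fin n)),
        (d / 2) ^ ((r + 1).choose 2) * (n : ℝ) ^ r / (r.factorial : ℝ) ≤ (𝒦.card : ℝ) ∧
        ∀ K ∈ 𝒦, K.card = r ∧ G.IsClique (K : Set (Fin n)) ∧
          d ^ r * (n : ℝ) / 2 ^ r ≤ (commonNbhdCard G K : ℝ) := by
  intro r _hr d hd0 hd1
  have hd2 : 0 < d/2 := by linarith
  have hd2l : d/2 < 1 := by linarith
  have hpow : (0:ℝ) < (d/2)^(2*r) := pow_pos hd2 _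
  refine ⟨(d/2)^(2*r)/4, by positivity, ?_⟩
  intro ρ hρ0 hρ
  refine ⟨⌈(2:ℝ) / (d/2)^(2*r)⌉₊, ?_⟩
  intro n hn G hld
  have hnR : 2 ≤ (d/2)^(2*r) * (n:ℝ) := by
    have h1 : (2:ℝ) / (d/2)^(2*r) ≤ (n:ℝ) :=
      le_trans (Nat.le_ceil _) (by exact_mod_cast hn)
    calc (2:ℝ) = (2 / (d/2)^(2*r)) * (d/2)^(2*r) := by field_simp
      _ ≤ (n:ℝ) * (d/2)^(2*r) := mul_le_mul_of_nonneg_right h1 hpow.le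
      _ = _ := mul_comm _ _
  have hK := KK_card hd0 hd1 hld hρ hnR r le_rfl
  refine ⟨KK G d r, hK, ?_⟩
  intro K hKm
  obtain ⟨h1, h2, h3⟩ := mem_KK.mp hKm
  refine ⟨h1, h2, ?_⟩
  rw [commonNbhdCard_eq]
  calc d^r * (n:ℝ) / 2^r = (d/2)^r * (n:ℝ) := by rw [div_pow]; ring
    _ ≤ _ := h3
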